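/- Let (Ω, μ) be a probability space with an ergodic measure-preserving transformation T : Ω → Ω, and let U : L²(Ω, μ) → L²(Ω, μ) be the induced Koopman operator, U g := g ∘ T. Let (f_n)_{n≥1} be a sequence in L²(Ω, μ) with f_n ≥ 0 pointwise μ-a.e. and f_{n+m} ≤ f_n + Uⁿ f_m pointwise μ-a.e. for all n, m ≥ 1. Let a_n := ∫_Ω f_n dμ; then (a_n) is subadditive, so A := lim_{n→∞} a_n / n exists and A ≥ 0. Then lim_{n→∞} ‖ (1/n) f_n − A ‖_{L²(Ω, μ)} = 0. -/

import Mathlib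

open MeasureTheory Filter Topology Function Finset

lemma aux_inj {m i1 j1 i2 j2 : ℕ} (h1 : 1 ≤ i1) (h2 : i1 ≤ m) (h3 : 1 ≤ i2) (h4 : i2 ≤ m)
    (h : i1 + j1 * m = i2 + j2 * m) : i1 = i2 ∧ j1 = j2 := by
  have main : ∀ a1 b1 a2 b2 : ℕ, 1 ≤ a1 → a1 ≤ m → 1 ≤ a2 → a2 ≤ m → b1 ≤ b2 →
      a1 + b1 * m = a2 + b2 * m → a1 = a2 ∧ b1 = b2 := by
    intro a1 b1 a2 b2 ha1 ha2 ha3 ha4 hb h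
    obtain ⟨d, rfl⟩ := Nat.exists_eq_add_of_le hb
    rw [add_mul] at h
    have hi : a1 = a2 + d * m := by
      have h' : a1 + b1 * m = (a2 + d * m) + b1 * m := by rw [h]; ring
      exact Nat.add_right_cancel h'
    have hd : d = 0 := by
      by_contra hd
      have hdm : m ≤ d * m := Nat.le_mul_of_pos_left m (by omega)
      have : a1 ≤ m := ha2
      rw [hi] at this
      linarith
    subst hd
    constructor
    · omega
    · omega
  rcases le_total j1 j2 with hj | hj
  · exact main i1 j1 i2 j2 h1 h2 h3 h4 hj h
  · obtain ⟨e1, e2⟩ := main i2 j2 i1 j1 h3 h4 h1 h2 hj h.symm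
    exact ⟨e1.symm, e2.symm⟩

lemma sum_blocks_le (m n : ℕ) (K : ℕ → ℕ)
    (hK : ∀ i ∈ Finset.Icc 1 m, ∀ j < K i, i + j * m < n)
    (g : ℕ → ℝ) (hg : ∀ s, 0 ≤ g s) :
    ∑ i ∈ Finset.Icc 1 m, ∑ j ∈ Finset.range (K i), g (i + j * m)
      ≤ ∑ s ∈ Finset.range n, g s := by
  classical
  rw [← Finset.sum_sigma (Finset.Icc 1 m) (fun i => Finset.range (K i))
    (fun p => g (p.1 + p.2 * m))]
  set S := (Finset.Icc 1 m).sigma fun i => Finset.range (K i) with hS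
  have hinj : Set.InjOn (fun p : Σ _ : ℕ, ℕ => p.1 + p.2 * m) S := by
    intro p hp q hq hpq
    simp only [Finset.mem_coe, hS, Finset.mem_sigma, Finset.mem_Icc, Finset.mem_range] at hp hq
    obtain ⟨e1, e2⟩ := aux_inj hp.1.1 hp.1.2 hq.1.1 hq.1.2 hpq
    exact Sigma.ext e1 (by simp [e2])
  rw [← Finset.sum_image (fun p hp q hq => hinj hp hq)]
  apply Finset.sum_le_sum_of_subset_of_nonneg
  · intro s hs
    simp only [Finset.mem_image] at hs
    obtain ⟨p, hp, rfl⟩ := hs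
    simp only [hS, Finset.mem_sigma, Finset.mem_Icc, Finset.mem_range] at hp
    exact Finset.mem_range.mpr (hK p.1 (Finset.mem_Icc.mpr hp.1) p.2 hp.2)
  · intro s _ _
    exact hg s

lemma rk_spec (m n i : ℕ) (hm : 1 ≤ m) (h : i + m ≤ n) :
    n = i + ((n - i) / m - 1) * m + ((n - i) % m + m) ∧ (n - i) % m + m < 2 * m := by
  have hmod : (n - i) % m < m := Nat.mod_lt _ hm
  have hdm := Nat.div_add_mod (n - i) m
  have hq : 1 ≤ (n - i) / m := by
    rw [Nat.one_le_div_iff hm]; omega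
  refine ⟨?_, by omega⟩
  have h2 : ((n - i) / m - 1) * m = m * ((n - i) / m) - m := by
    rw [Nat.sub_mul, one_mul, mul_comm]
  rw [h2]
  have h3 : m ≤ m * ((n - i) / m) := Nat.le_mul_of_pos_right m hq
  generalize hMQ : m * ((n - i) / m) = P at hdm h3
  omega

section Blocks
variable {Ω : Type*} [MeasurableSpace Ω] {μ : Measure Ω} {T : Ω → Ω}

lemma block_decomp (hT : MeasurePreserving T μ μ) (f : ℕ → Ω → ℝ)
    (hsub : ∀ n m : ℕ, 1 ≤ n → 1 ≤ m → ∀ᵐ ω ∂μ, f (n + m) ω ≤ f n ω + f m (T^[n] ω))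
    (m r : ℕ) (hm : 1 ≤ m) (hr : 1 ≤ r) (k : ℕ) :
    ∀ᵐ ω ∂μ, f (k * m + r) ω ≤ (∑ j ∈ Finset.range k, f m (T^[j * m] ω)) + f r (T^[k * m] ω) := by
  induction k with
  | zero => filter_upwards with ω; simp
  | succ k ih =>
    have h1 := hsub m (k * m + r) hm (by omega)
    have h2 := (hT.iterate m).quasiMeasurePreserving.ae ih
    filter_upwards [h1, h2] with ω e1 e2
    have hidx : (k + 1) * m + r = m + (k * m + r) := by ring
    rw [hidx]
    refine le_trans e1 ?_
    have hcomp : ∀ j : ℕ, T^[j * m] (T^[m] ω) = T^[(j + 1) * m] ω := by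
      intro j
      rw [← Function.iterate_add_apply]
      congr 1
      ring
    have e2' : f (k * m + r) (T^[m] ω)
        ≤ (∑ j ∈ Finset.range k, f m (T^[(j + 1) * m] ω)) + f r (T^[(k + 1) * m] ω) := by
      refine le_of_le_of_eq e2 ?_
      congr 1
      · exact Finset.sum_congr rfl fun j _ => by rw [hcomp]
      · rw [hcomp]
    have hsum : ∑ j ∈ Finset.range (k + 1), f m (T^[j * m] ω)
        = (∑ j ∈ Finset.range k, f m (T^[(j + 1) * m] ω)) + f m ω := by
      rw [Finset.sum_range_succ' (fun j => f m (T^[j * m] ω)) k]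
      simp
    rw [hsum]
    linarith

lemma key_ineq (hT : MeasurePreserving T μ μ) (f : ℕ → Ω → ℝ)
    (hnonneg : ∀ n, 1 ≤ n → ∀ᵐ ω ∂μ, 0 ≤ f n ω)
    (hsub : ∀ n m : ℕ, 1 ≤ n → 1 ≤ m → ∀ᵐ ω ∂μ, f (n + m) ω ≤ f n ω + f m (T^[n] ω))
    (m n : ℕ) (hm : 1 ≤ m) (hn : 2 * m ≤ n) :
    ∀ᵐ ω ∂μ, (m : ℝ) * f n ω ≤ (∑ s ∈ Finset.range n, f m (T^[s] ω))
      + ((∑ i ∈ Finset.Icc 1 m, f i ω)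
        + ∑ i ∈ Finset.Icc 1 m, f ((n - i) % m + m) (T^[n - ((n - i) % m + m)] ω)) := by
  set R : ℕ → ℕ := fun i => (n - i) % m + m with hR
  set K : ℕ → ℕ := fun i => (n - i) / m - 1 with hK
  have hspec : ∀ i ∈ Finset.Icc 1 m, n = i + K i * m + R i ∧ R i < 2 * m := by
    intro i hi
    simp only [Finset.mem_Icc] at hi
    exact rk_spec m n i hm (by omega)
  have hRm : ∀ i, m ≤ R i := fun i => Nat.le_add_left m _
  have hper : ∀ i ∈ Finset.Icc 1 m, ∀ᵐ ω ∂μ,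
      f n ω ≤ f i ω + ((∑ j ∈ Finset.range (K i), f m (T^[i + j * m] ω))
        + f (R i) (T^[n - R i] ω)) := by
    intro i hi
    obtain ⟨hni, hRlt⟩ := hspec i hi
    simp only [Finset.mem_Icc] at hi
    have hKR1 : 1 ≤ K i * m + R i :=
      le_trans (le_trans hm (hRm i)) (Nat.le_add_left _ _)
    have h1 := hsub i (K i * m + R i) hi.1 hKR1
    have h2 := (hT.iterate i).quasiMeasurePreserving.ae
      (block_decomp hT f hsub m (R i) hm (le_trans hm (hRm i)) (K i))
    filter_upwards [h1, h2] with ω e1 e2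
    have hn_eq : n = i + (K i * m + R i) := by rw [hni, add_assoc]
    have e1' : f n ω ≤ f i ω + f (K i * m + R i) (T^[i] ω) := by
      rw [hn_eq]; exact e1
    refine e1'.trans ?_
    have hc1 : ∀ j : ℕ, T^[j * m] (T^[i] ω) = T^[i + j * m] ω := by
      intro j
      rw [← Function.iterate_add_apply]
      congr 1
      ring
    have hc2 : T^[K i * m] (T^[i] ω) = T^[n - R i] ω := by
      rw [← Function.iterate_add_apply]
      congr 1
      rw [hni, Nat.add_sub_cancel, add_comm]
    have e2' : f (K i * m + R i) (T^[i] ω)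
        ≤ (∑ j ∈ Finset.range (K i), f m (T^[i + j * m] ω)) + f (R i) (T^[n - R i] ω) := by
      refine le_of_le_of_eq e2 ?_
      congr 1
      · exact Finset.sum_congr rfl fun j _ => by rw [hc1]
      · rw [hc2]
    linarith
  have hall : ∀ᵐ ω ∂μ, ∀ i ∈ Finset.Icc 1 m,
      f n ω ≤ f i ω + ((∑ j ∈ Finset.range (K i), f m (T^[i + j * m] ω))
        + f (R i) (T^[n - R i] ω)) :=
    (Filter.eventually_all_finset _).2 hper
  have hpos : ∀ᵐ ω ∂μ, ∀ s : ℕ, 0 ≤ f m (T^[s] ω) :=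
    ae_all_iff.2 fun s => (hT.iterate s).quasiMeasurePreserving.ae (hnonneg m hm)
  filter_upwards [hall, hpos] with ω e1 e2
  have hcard : (m : ℝ) * f n ω = ∑ _i ∈ Finset.Icc 1 m, f n ω := by
    rw [Finset.sum_const, Nat.card_Icc, nsmul_eq_mul]
    norm_num
  rw [hcard]
  have step1 : ∑ i ∈ Finset.Icc 1 m, f n ω
      ≤ ∑ i ∈ Finset.Icc 1 m, (f i ω + ((∑ j ∈ Finset.range (K i), f m (T^[i + j * m] ω))
        + f (R i) (T^[n - R i] ω))) :=
    Finset.sum_le_sum e1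
  refine step1.trans ?_
  rw [Finset.sum_add_distrib, Finset.sum_add_distrib]
  have hmid : ∑ i ∈ Finset.Icc 1 m, ∑ j ∈ Finset.range (K i), f m (T^[i + j * m] ω)
      ≤ ∑ s ∈ Finset.range n, f m (T^[s] ω) := by
    apply sum_blocks_le m n K _ _ e2
    intro i hi j hj
    obtain ⟨hni, _⟩ := hspec i hi
    calc i + j * m < i + K i * m :=
          Nat.add_lt_add_left (Nat.mul_lt_mul_of_pos_right hj (show 0 < m by omega)) i
      _ ≤ n := by rw [hni]; exact Nat.le_add_right _ _
  have hRsum : ∑ i ∈ Finset.Icc 1 m, f (R i) (T^[n - R i] ω)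
      = ∑ i ∈ Finset.Icc 1 m, f ((n - i) % m + m) (T^[n - ((n - i) % m + m)] ω) := rfl
  linarith
end Blocks

section VN
variable {Ω : Type*} [MeasurableSpace Ω] {μ : Measure Ω}

noncomputable def koopman {T : Ω → Ω} (hT : MeasurePreserving T μ μ) :
    Lp ℝ 2 μ →L[ℝ] Lp ℝ 2 μ :=
  (Lp.compMeasurePreservingₗᵢ ℝ T hT).toContinuousLinearMap

lemma koopman_coeFn {T : Ω → Ω} (hT : MeasurePreserving T μ μ) (x : Lp ℝ 2 μ) :
    ⇑(koopman hT x) =ᵐ[μ] ⇑x ∘ T :=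
  Lp.coeFn_compMeasurePreserving x hT

noncomputable def oneLp (μ : Measure Ω) [IsProbabilityMeasure μ] : Lp ℝ 2 μ :=
  (memLp_const (1:ℝ)).toLp _

lemma oneLp_coeFn [IsProbabilityMeasure μ] : ⇑(oneLp μ) =ᵐ[μ] fun _ => (1:ℝ) :=
  MemLp.coeFn_toLp _

lemma oneLp_norm [IsProbabilityMeasure μ] : ‖oneLp μ‖ = 1 := by
  rw [oneLp, Lp.norm_toLp (fun _ => (1:ℝ)) (memLp_const 1),
    eLpNorm_const (1:ℝ) two_ne_zero (IsProbabilityMeasure.ne_zero μ)]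
  simp

lemma inner_oneLp [IsProbabilityMeasure μ] (x : Lp ℝ 2 μ) :
    (inner (𝕜 := ℝ) (oneLp μ) x) = ∫ ω, x ω ∂μ := by
  rw [L2.inner_def]
  refine integral_congr_ae ?_
  filter_upwards [oneLp_coeFn (μ := μ)] with ω h
  simp [h, RCLike.inner_apply]

lemma integral_comp_T [IsProbabilityMeasure μ] {T : Ω → Ω} (hT : MeasurePreserving T μ μ)
    {g : Ω → ℝ} (hg : AEStronglyMeasurable g μ) :
    ∫ ω, g (T ω) ∂μ = ∫ ω, g ω ∂μ := by
  conv_rhs => rw [← hT.map_eq]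
  rw [integral_map hT.measurable.aemeasurable]
  rw [hT.map_eq]; exact hg

lemma inner_one_koopman [IsProbabilityMeasure μ] {T : Ω → Ω} (hT : MeasurePreserving T μ μ)
    (y : Lp ℝ 2 μ) :
    (inner (𝕜 := ℝ) (oneLp μ) (koopman hT y)) = inner (𝕜 := ℝ) (oneLp μ) y := by
  rw [inner_oneLp, inner_oneLp]
  rw [integral_congr_ae (koopman_coeFn hT y)]
  exact integral_comp_T hT (Lp.aestronglyMeasurable y)

set_option maxHeartbeats 1000000 in
lemma ergodic_vonNeumann [IsProbabilityMeasure μ] {T : Ω → Ω} (hT : Ergodic T μ)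
    (x : Lp ℝ 2 μ) :
    Tendsto (fun n => birkhoffAverage ℝ (⇑(koopman hT.toMeasurePreserving)) _root_.id n x)
      atTop (𝓝 ((∫ ω, x ω ∂μ) • oneLp μ)) := by
  set U := koopman hT.toMeasurePreserving with hU
  obtain ⟨L, hlim⟩ : ∃ L, Tendsto (fun n => birkhoffAverage ℝ (⇑U) _root_.id n x) atTop (𝓝 L) :=
    ⟨_, U.tendsto_birkhoffAverage_orthogonalProjection
      (LinearIsometry.norm_toContinuousLinearMap_le _) x⟩
  suffices hL : L = (∫ ω, x ω ∂μ) • oneLp μ by rwa [← hL]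
  -- Step 1: U L = L
  have key : ∀ n : ℕ, U (birkhoffAverage ℝ (⇑U) _root_.id n x)
      = birkhoffAverage ℝ (⇑U) _root_.id n x + (n:ℝ)⁻¹ • ((⇑U)^[n] x - x) := by
    intro n
    simp only [birkhoffAverage, birkhoffSum, _root_.id]
    rw [_root_.map_smul, map_sum, ← smul_add]
    congr 1
    have h1 : ∀ k, U ((⇑U)^[k] x) = (⇑U)^[k+1] x := fun k =>
      (Function.iterate_succ_apply' (⇑U) k x).symm
    calc ∑ k ∈ Finset.range n, U ((⇑U)^[k] x) = ∑ k ∈ Finset.range n, (⇑U)^[k+1] x := by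
          simp only [h1]
      _ = ∑ k ∈ Finset.range (n+1), (⇑U)^[k] x - (⇑U)^[0] x := by
          rw [Finset.sum_range_succ' (fun k => (⇑U)^[k] x) n]; abel
      _ = ∑ k ∈ Finset.range n, (⇑U)^[k] x + ((⇑U)^[n] x - x) := by
          rw [Finset.sum_range_succ]; simp; abel
  have hsmall : Tendsto (fun n : ℕ => (n:ℝ)⁻¹ • ((⇑U)^[n] x - x)) atTop (𝓝 0) := by
    apply squeeze_zero_norm (a := fun n : ℕ => (n:ℝ)⁻¹ * (2 * ‖x‖))
    · intro n
      rw [norm_smul]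
      have hb : ‖(⇑U)^[n] x - x‖ ≤ 2 * ‖x‖ := by
        have : ‖(⇑U)^[n] x‖ = ‖x‖ := by
          induction n with
          | zero => simp
          | succ k ih =>
              rw [Function.iterate_succ_apply']
              rw [show ∀ y, U y = Lp.compMeasurePreserving T hT.toMeasurePreserving y
                from fun _ => rfl]
              rw [Lp.norm_compMeasurePreserving]
              exact ih
        calc ‖(⇑U)^[n] x - x‖ ≤ ‖(⇑U)^[n] x‖ + ‖x‖ := norm_sub_le _ _
          _ = 2 * ‖x‖ := by rw [this]; ring
      have : ‖((n:ℝ)⁻¹ : ℝ)‖ = (n:ℝ)⁻¹ := by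
        rw [Real.norm_eq_abs, abs_of_nonneg (by positivity)]
      rw [this]
      exact mul_le_mul_of_nonneg_left hb (by positivity)
    · have := tendsto_inv_atTop_nhds_zero_nat.mul_const (2 * ‖x‖)
      simpa using this
  have hfix : U L = L := by
    have h1 : Tendsto (fun n => U (birkhoffAverage ℝ (⇑U) _root_.id n x)) atTop (𝓝 (U L)) :=
      (U.continuous.tendsto L).comp hlim
    have h2 : Tendsto (fun n => U (birkhoffAverage ℝ (⇑U) _root_.id n x)) atTop (𝓝 L) := by
      have h3 := hlim.add hsmall
      rw [add_zero] at h3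
      exact h3.congr fun n => (key n).symm
    exact tendsto_nhds_unique h1 h2
  -- Step 2: L is a.e. constant
  have hzT : ⇑L ∘ T =ᵐ[μ] ⇑L := by
    have h := koopman_coeFn hT.toMeasurePreserving L
    rw [show koopman hT.toMeasurePreserving L = U L from rfl, hfix] at h
    exact h.symm
  obtain ⟨c, hc⟩ := hT.ae_eq_const_of_ae_eq_comp_ae (Lp.aestronglyMeasurable L) hzT
  -- Step 3: identify the constant via inner product with 1
  have hiterate : ∀ k : ℕ, (inner (𝕜 := ℝ) (oneLp μ) ((⇑U)^[k] x)) = inner (𝕜 := ℝ) (oneLp μ) x := by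
    intro k
    induction k with
    | zero => simp
    | succ k ih =>
        rw [Function.iterate_succ_apply', inner_one_koopman hT.toMeasurePreserving]
        exact ih
  have hinner_avg : ∀ n : ℕ, 1 ≤ n →
      (inner (𝕜 := ℝ) (oneLp μ) (birkhoffAverage ℝ (⇑U) _root_.id n x)) = inner (𝕜 := ℝ) (oneLp μ) x := by
    intro n hn
    simp only [birkhoffAverage, birkhoffSum, _root_.id]
    rw [inner_smul_right, inner_sum]
    simp only [hiterate]
    rw [Finset.sum_const, Finset.card_range, nsmul_eq_mul]
    rw [← mul_assoc, inv_mul_cancel₀ (Nat.cast_ne_zero.mpr (by omega)), one_mul]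
  have hinnerL : (inner (𝕜 := ℝ) (oneLp μ) L) = inner (𝕜 := ℝ) (oneLp μ) x := by
    have h1 : Tendsto (fun n => (inner (𝕜 := ℝ) (oneLp μ) (birkhoffAverage ℝ (⇑U) _root_.id n x)))
        atTop (𝓝 (inner (𝕜 := ℝ) (oneLp μ) L)) :=
      ((innerSL ℝ (oneLp μ)).continuous.tendsto L).comp hlim
    have h2 : Tendsto (fun n => (inner (𝕜 := ℝ) (oneLp μ) (birkhoffAverage ℝ (⇑U) _root_.id n x)))
        atTop (𝓝 (inner (𝕜 := ℝ) (oneLp μ) x)) := by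
      apply Tendsto.congr' _ tendsto_const_nhds
      filter_upwards [eventually_ge_atTop 1] with n hn
      exact (hinner_avg n hn).symm
    exact tendsto_nhds_unique h1 h2
  have hLc : L = c • oneLp μ := by
    apply Lp.ext
    filter_upwards [hc, Lp.coeFn_smul c (oneLp μ), oneLp_coeFn (μ := μ)] with ω e1 e2 e3
    rw [e1, e2, Pi.smul_apply, e3]
    simp
  have hc_eq : c = ∫ ω, x ω ∂μ := by
    have h1 : (inner (𝕜 := ℝ) (oneLp μ) L) = c := by
      rw [hLc, inner_smul_right, real_inner_self_eq_norm_sq, oneLp_norm]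
      simp
    rw [h1] at hinnerL
    rw [hinnerL, inner_oneLp]
  rw [hLc, hc_eq]
end VN

lemma koopman_iterate_coeFn {Ω : Type*} [MeasurableSpace Ω] {μ : Measure Ω} {T : Ω → Ω}
    (hT : MeasurePreserving T μ μ) (x : Lp ℝ 2 μ) (k : ℕ) :
    ⇑((⇑(koopman hT))^[k] x) =ᵐ[μ] fun ω => x (T^[k] ω) := by
  induction k with
  | zero => simp
  | succ k ih =>
      rw [Function.iterate_succ_apply']
      filter_upwards [koopman_coeFn hT ((⇑(koopman hT))^[k] x),
        hT.quasiMeasurePreserving.ae ih] with ω h1 h2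
      simp only [Function.comp_apply] at h1
      rw [h1, h2, Function.iterate_succ_apply]

section MoreHelpers
variable {Ω : Type*} [MeasurableSpace Ω] {μ : Measure Ω}

lemma lp_coeFn_sum {ι : Type*} (s : Finset ι) (F : ι → Lp ℝ 2 μ) :
    ⇑(∑ i ∈ s, F i) =ᵐ[μ] fun ω => ∑ i ∈ s, F i ω := by
  classical
  induction s using Finset.induction_on with
  | empty => simp only [Finset.sum_empty]; exact Lp.coeFn_zero ℝ 2 μ
  | @insert a s hnotmem ih =>
      rw [Finset.sum_insert hnotmem]
      filter_upwards [Lp.coeFn_add (F a) (∑ i ∈ s, F i), ih] with ω h1 h2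
      rw [h1, Pi.add_apply, h2, Finset.sum_insert hnotmem]

lemma lp_norm_le_of_ae_abs_le (x y : Lp ℝ 2 μ) (h : ∀ᵐ ω ∂μ, |x ω| ≤ |y ω|) : ‖x‖ ≤ ‖y‖ := by
  rw [Lp.norm_def, Lp.norm_def]
  refine ENNReal.toReal_mono (Lp.eLpNorm_ne_top y) (eLpNorm_mono_ae ?_)
  filter_upwards [h] with ω hω
  simpa [Real.norm_eq_abs] using hω

end MoreHelpers
set_option maxHeartbeats 3000000 in
/-- **Mean (L²) Kingman subadditive ergodic theorem.**
For a nonnegative subadditive sequence `f_{n+m} ≤ f_n + f_m ∘ T^n` in `L²`, the averages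
`a_n = ∫ f_n` are subadditive, `A = lim a_n/n ≥ 0`, and `(1/n) f_n → A` in `L²`. -/
theorem mean_kingman_subadditive_ergodic
    {Ω : Type*} [MeasurableSpace Ω] {μ : Measure Ω} [IsProbabilityMeasure μ]
    {T : Ω → Ω} (hT : Ergodic T μ)
    (f : ℕ → Ω → ℝ)
    (hL2 : ∀ n, 1 ≤ n → MemLp (f n) 2 μ)
    (hnonneg : ∀ n, 1 ≤ n → ∀ᵐ ω ∂μ, 0 ≤ f n ω)
    (hsub : ∀ n m : ℕ, 1 ≤ n → 1 ≤ m →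
      ∀ᵐ ω ∂μ, f (n + m) ω ≤ f n ω + f m (T^[n] ω))
    (A : ℝ)
    (hA : Tendsto (fun n : ℕ => (∫ ω, f n ω ∂μ) / (n : ℝ)) atTop (𝓝 A)) :
    (∀ n m : ℕ, 1 ≤ n → 1 ≤ m →
      (∫ ω, f (n + m) ω ∂μ) ≤ (∫ ω, f n ω ∂μ) + (∫ ω, f m ω ∂μ)) ∧
    0 ≤ A ∧
    Tendsto (fun n : ℕ => eLpNorm (fun ω => f n ω / (n : ℝ) - A) 2 μ) atTop (𝓝 0) := by
  have hTP := hT.toMeasurePreserving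
  set a : ℕ → ℝ := fun n => ∫ ω, f n ω ∂μ with ha
  have hInt : ∀ n, 1 ≤ n → Integrable (f n) μ := fun n hn => (hL2 n hn).integrable one_le_two
  have hcompInt : ∀ n k, 1 ≤ k → ∫ ω, f k (T^[n] ω) ∂μ = a k := by
    intro n k hk
    have h1 : ∫ ω, f k ω ∂μ = ∫ ω, f k (T^[n] ω) ∂μ := by
      conv_lhs => rw [← (hTP.iterate n).map_eq]
      rw [integral_map (hTP.iterate n).measurable.aemeasurable]
      rw [(hTP.iterate n).map_eq]
      exact (hL2 k hk).aestronglyMeasurable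
    simp only [ha]
    rw [← h1]
  have hsubInt : ∀ n m : ℕ, 1 ≤ n → 1 ≤ m → a (n + m) ≤ a n + a m := by
    intro n m hn hm
    have h1 : Integrable (fun ω => f m (T^[n] ω)) μ :=
      ((hL2 m hm).comp_measurePreserving (hTP.iterate n)).integrable one_le_two
    calc a (n + m) ≤ ∫ ω, (f n ω + f m (T^[n] ω)) ∂μ :=
          integral_mono_ae (hInt _ (by omega)) ((hInt n hn).add h1) (hsub n m hn hm)
      _ = a n + a m := by rw [integral_add (hInt n hn) h1, hcompInt n m hm]
  have hA0 : 0 ≤ A := by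
    refine ge_of_tendsto' hA fun n => ?_
    rcases Nat.eq_zero_or_pos n with rfl | hn
    · simp
    · exact div_nonneg (integral_nonneg_of_ae (hnonneg n hn)) (Nat.cast_nonneg n)
  refine ⟨hsubInt, hA0, ?_⟩
  set X : ℕ → Lp ℝ 2 μ := fun n => if h : 1 ≤ n then (hL2 n h).toLp (f n) else 0 with hX
  have hXcoe : ∀ n, 1 ≤ n → ⇑(X n) =ᵐ[μ] f n := by
    intro n hn
    simp only [hX, dif_pos hn]
    exact MemLp.coeFn_toLp _
  set Z : ℕ → Lp ℝ 2 μ := fun n => (n : ℝ)⁻¹ • X n - A • oneLp μ with hZ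
  have hZcoe : ∀ n, 1 ≤ n → ⇑(Z n) =ᵐ[μ] fun ω => f n ω / n - A := by
    intro n hn
    filter_upwards [Lp.coeFn_sub ((n : ℝ)⁻¹ • X n) (A • oneLp μ),
      Lp.coeFn_smul ((n : ℝ)⁻¹) (X n), Lp.coeFn_smul A (oneLp μ), hXcoe n hn,
      oneLp_coeFn (μ := μ)] with ω e1 e2 e3 e4 e5
    simp only [hZ]
    rw [e1, Pi.sub_apply, e2, e3, Pi.smul_apply, Pi.smul_apply, e4, e5]
    simp [div_eq_inv_mul]
  set P : ℕ → Lp ℝ 2 μ := fun n => Lp.posPart (Z n) with hP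
  set N : ℕ → Lp ℝ 2 μ := fun n => Lp.negPart (Z n) with hN
  have hZPN : ∀ n, Z n = P n - N n := by
    intro n
    apply Lp.ext
    filter_upwards [Lp.coeFn_posPart (Z n), Lp.coeFn_negPart_eq_max (Z n),
      Lp.coeFn_sub (P n) (N n)] with ω e1 e2 e3
    rw [e3, Pi.sub_apply]
    simp only [hP, hN]
    rw [e1, e2]
    rcases le_total (Z n ω) 0 with h | h
    · rw [max_eq_right h, max_eq_left (by linarith : (0:ℝ) ≤ -(Z n ω))]; ring
    · rw [max_eq_left h, max_eq_right (by linarith : -(Z n ω) ≤ (0:ℝ))]; ring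
  have hPcoe : ∀ n, 1 ≤ n → ⇑(P n) =ᵐ[μ] fun ω => max (f n ω / n - A) 0 := by
    intro n hn
    filter_upwards [Lp.coeFn_posPart (Z n), hZcoe n hn] with ω e1 e2
    simp only [hP]
    rw [e1, e2]
  have hNcoe : ∀ n, 1 ≤ n → ⇑(N n) =ᵐ[μ] fun ω => max (-(f n ω / n - A)) 0 := by
    intro n hn
    filter_upwards [Lp.coeFn_negPart_eq_max (Z n), hZcoe n hn] with ω e1 e2
    simp only [hN]
    rw [e1, e2]
  -- Part 1 : the positive part tends to 0 in L²
  have part1 : Tendsto (fun n => ‖P n‖) atTop (𝓝 0) := by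
    refine tendsto_order.2 ⟨fun b hb => Eventually.of_forall
      fun n => lt_of_lt_of_le hb (norm_nonneg _), fun ε hε => ?_⟩
    obtain ⟨M, hM⟩ := Metric.tendsto_atTop.1 hA (ε / 3) (by linarith)
    set m := max M 1 with hm_def
    have hm1 : 1 ≤ m := le_max_right _ _
    have hm0 : (0 : ℝ) < m := by exact_mod_cast hm1
    have hdist : |a m / m - A| < ε / 3 := by
      have := hM m (le_max_left _ _)
      rwa [Real.dist_eq] at this
    set Rn : ℕ → ℕ → ℕ := fun n i => (n - i) % m + m with hRn
    have hRn1 : ∀ n i, 1 ≤ Rn n i := fun n i => le_trans hm1 (Nat.le_add_left m _)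
    set B : ℕ → Lp ℝ 2 μ := fun n => (∑ i ∈ Finset.Icc 1 m, X i)
      + ∑ i ∈ Finset.Icc 1 m,
          Lp.compMeasurePreserving (T^[n - Rn n i]) (hTP.iterate _) (X (Rn n i)) with hB
    set C : ℝ := (∑ i ∈ Finset.Icc 1 m, ‖X i‖)
      + (m : ℝ) * ∑ r ∈ Finset.Icc m (2 * m), ‖X r‖ with hC
    have hBnorm : ∀ n, ‖B n‖ ≤ C := by
      intro n
      simp only [hB, hC]
      refine le_trans (norm_add_le _ _) (add_le_add (norm_sum_le _ _) ?_)
      refine le_trans (norm_sum_le _ _) ?_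
      have hterm : ∀ i ∈ Finset.Icc 1 m,
          ‖Lp.compMeasurePreserving (T^[n - Rn n i]) (hTP.iterate _) (X (Rn n i))‖
          ≤ ∑ r ∈ Finset.Icc m (2 * m), ‖X r‖ := by
        intro i _
        rw [Lp.norm_compMeasurePreserving]
        refine Finset.single_le_sum (f := fun r => ‖X r‖) (fun r _ => norm_nonneg _) ?_
        rw [Finset.mem_Icc]
        refine ⟨Nat.le_add_left m _, ?_⟩
        have : (n - i) % m < m := Nat.mod_lt _ (by omega)
        simp only [hRn]
        omega
      refine le_trans (Finset.sum_le_sum hterm) ?_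
      rw [Finset.sum_const, Nat.card_Icc, nsmul_eq_mul]
      norm_num
    have hBcoe : ∀ n, ⇑(B n) =ᵐ[μ] fun ω => (∑ i ∈ Finset.Icc 1 m, f i ω)
        + ∑ i ∈ Finset.Icc 1 m, f (Rn n i) (T^[n - Rn n i] ω) := by
      intro n
      have hc1 : ∀ᵐ ω ∂μ, ∀ i ∈ Finset.Icc 1 m,
          (Lp.compMeasurePreserving (T^[n - Rn n i]) (hTP.iterate _) (X (Rn n i))) ω
            = X (Rn n i) (T^[n - Rn n i] ω) :=
        (Filter.eventually_all_finset _).2 fun i _ =>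
          Lp.coeFn_compMeasurePreserving (X (Rn n i)) (hTP.iterate _)
      have hc2 : ∀ᵐ ω ∂μ, ∀ i ∈ Finset.Icc 1 m,
          X (Rn n i) (T^[n - Rn n i] ω) = f (Rn n i) (T^[n - Rn n i] ω) :=
        (Filter.eventually_all_finset _).2 fun i _ =>
          (hTP.iterate _).quasiMeasurePreserving.ae (hXcoe (Rn n i) (hRn1 n i))
      have hc3 : ∀ᵐ ω ∂μ, ∀ i ∈ Finset.Icc 1 m, X i ω = f i ω :=
        (Filter.eventually_all_finset _).2 fun i hi =>
          hXcoe i (Finset.mem_Icc.1 hi).1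
      filter_upwards [Lp.coeFn_add (∑ i ∈ Finset.Icc 1 m, X i)
          (∑ i ∈ Finset.Icc 1 m,
            Lp.compMeasurePreserving (T^[n - Rn n i]) (hTP.iterate _) (X (Rn n i))),
        lp_coeFn_sum (Finset.Icc 1 m) X,
        lp_coeFn_sum (Finset.Icc 1 m) (fun i =>
          Lp.compMeasurePreserving (T^[n - Rn n i]) (hTP.iterate _) (X (Rn n i))),
        hc1, hc2, hc3] with ω e1 e2 e3 e4 e5 e6
      simp only [hB]
      rw [e1, Pi.add_apply, e2, e3]
      congr 1
      · exact Finset.sum_congr rfl fun i hi => e6 i hi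
      · exact Finset.sum_congr rfl fun i hi => (e4 i hi).trans (e5 i hi)
    set U := koopman hTP with hU
    set birk : ℕ → Lp ℝ 2 μ := fun n => birkhoffAverage ℝ (⇑U) _root_.id n (X m) with hbirk
    have hbirk_tendsto : Tendsto (fun n => ‖birk n - (a m) • oneLp μ‖) atTop (𝓝 0) := by
      have h := ergodic_vonNeumann hT (X m)
      have h2 : ∫ ω, (X m) ω ∂μ = a m := integral_congr_ae (hXcoe m hm1)
      rw [h2] at h
      exact tendsto_iff_norm_sub_tendsto_zero.1 h
    have hbirk_coe : ∀ n, ⇑(birk n) =ᵐ[μ]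
        fun ω => (n : ℝ)⁻¹ * ∑ s ∈ Finset.range n, f m (T^[s] ω) := by
      intro n
      have heq : birk n = (n : ℝ)⁻¹ • ∑ k ∈ Finset.range n, (⇑U)^[k] (X m) := rfl
      have hc : ∀ᵐ ω ∂μ, ∀ k ∈ Finset.range n, ((⇑U)^[k] (X m)) ω = f m (T^[k] ω) := by
        refine (Filter.eventually_all_finset _).2 fun k _ => ?_
        filter_upwards [koopman_iterate_coeFn hTP (X m) k,
          (hTP.iterate k).quasiMeasurePreserving.ae (hXcoe m hm1)] with ω e1 e2
        rw [e1, e2]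
      filter_upwards [Lp.coeFn_smul ((n : ℝ)⁻¹) (∑ k ∈ Finset.range n, (⇑U)^[k] (X m)),
        lp_coeFn_sum (Finset.range n) (fun k => (⇑U)^[k] (X m)), hc] with ω e1 e2 e3
      rw [heq, e1, Pi.smul_apply, e2, smul_eq_mul]
      congr 1
      exact Finset.sum_congr rfl fun k hk => e3 k hk
    set W : ℕ → Lp ℝ 2 μ := fun n => (m : ℝ)⁻¹ • (birk n - (a m) • oneLp μ)
      + ((m : ℝ) * n)⁻¹ • B n + ((a m / m - A)) • oneLp μ with hW
    have hPW : ∀ n, 2 * m ≤ n → ‖P n‖ ≤ ‖W n‖ := by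
      intro n hn2
      have hn1 : 1 ≤ n := by omega
      have hn0 : (0 : ℝ) < n := by exact_mod_cast hn1
      apply lp_norm_le_of_ae_abs_le
      have hkey := key_ineq hTP f hnonneg hsub m n hm1 hn2
      have hWcoe : ⇑(W n) =ᵐ[μ] fun ω =>
          (m : ℝ)⁻¹ * ((birk n) ω - a m * 1) + ((m : ℝ) * n)⁻¹ * (B n) ω
            + (a m / m - A) * 1 := by
        filter_upwards [Lp.coeFn_add ((m : ℝ)⁻¹ • (birk n - (a m) • oneLp μ)
            + ((m : ℝ) * n)⁻¹ • B n) (((a m / m - A)) • oneLp μ),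
          Lp.coeFn_add ((m : ℝ)⁻¹ • (birk n - (a m) • oneLp μ)) (((m : ℝ) * n)⁻¹ • B n),
          Lp.coeFn_smul ((m : ℝ)⁻¹) (birk n - (a m) • oneLp μ),
          Lp.coeFn_smul (((m : ℝ) * n)⁻¹) (B n),
          Lp.coeFn_smul ((a m / m - A)) (oneLp μ),
          Lp.coeFn_sub (birk n) ((a m) • oneLp μ),
          Lp.coeFn_smul (a m) (oneLp μ),
          oneLp_coeFn (μ := μ)] with ω e1 e2 e3 e4 e5 e6 e7 e8
        simp only [hW]
        rw [e1, Pi.add_apply, e2, Pi.add_apply, e3, e4, e5, Pi.smul_apply, Pi.smul_apply,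
          Pi.smul_apply, e6, Pi.sub_apply, e7, Pi.smul_apply, e8]
        simp [smul_eq_mul]
      filter_upwards [hPcoe n hn1, hkey, hBcoe n, hWcoe, hbirk_coe n] with ω e1 e2 e3 e4 e5
      simp only [hP] at e1 ⊢
      rw [e1]
      have hβ : (B n) ω = (∑ i ∈ Finset.Icc 1 m, f i ω)
          + ∑ i ∈ Finset.Icc 1 m, f (Rn n i) (T^[n - Rn n i] ω) := e3
      simp only [hRn] at hβ
      have hWω : W n ω
          = (m : ℝ)⁻¹ * ((n : ℝ)⁻¹ * (∑ s ∈ Finset.range n, f m (T^[s] ω)) - a m * 1)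
            + ((m : ℝ) * n)⁻¹ * (B n) ω + (a m / m - A) * 1 := by rw [e4, e5]
      have hle : f n ω / n - A ≤ W n ω := by
        have key : (m : ℝ) * f n ω ≤ (∑ s ∈ Finset.range n, f m (T^[s] ω)) + (B n) ω := by
          rw [hβ]; exact e2
        rw [hWω]
        have h1 : f n ω / n - A = ((m : ℝ) * f n ω) / ((m : ℝ) * n) - A := by
          rw [mul_div_mul_left _ _ (ne_of_gt hm0)]
        have hc : (0 : ℝ) < (m : ℝ) * n := by positivity
        have h2 : ((m : ℝ) * f n ω) / ((m : ℝ) * n)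
            ≤ ((∑ s ∈ Finset.range n, f m (T^[s] ω)) + (B n) ω) / ((m : ℝ) * n) :=
          (div_le_div_iff_of_pos_right hc).2 key
        have h3 : ((∑ s ∈ Finset.range n, f m (T^[s] ω)) + (B n) ω) / ((m : ℝ) * n) - A
            = (m : ℝ)⁻¹ * ((n : ℝ)⁻¹ * (∑ s ∈ Finset.range n, f m (T^[s] ω)) - a m * 1)
              + ((m : ℝ) * n)⁻¹ * (B n) ω + (a m / m - A) * 1 := by
          field_simp
          ring
        linarith
      calc |max (f n ω / n - A) 0| = max (f n ω / n - A) 0 :=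
            abs_of_nonneg (le_max_right _ _)
        _ ≤ max (W n ω) 0 := max_le_max hle le_rfl
        _ ≤ |W n ω| := by
            rcases le_total (W n ω) 0 with h | h
            · rw [max_eq_right h]; exact abs_nonneg _
            · rw [max_eq_left h]; exact le_abs_self _
    have hWnorm : ∀ n, 1 ≤ n → ‖W n‖ ≤ (m : ℝ)⁻¹ * ‖birk n - (a m) • oneLp μ‖
        + ((m : ℝ) * n)⁻¹ * C + |a m / m - A| := by
      intro n hn1
      have hn0 : (0 : ℝ) < n := by exact_mod_cast hn1
      have e1 : ‖(m : ℝ)⁻¹ • (birk n - (a m) • oneLp μ)‖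
          = (m : ℝ)⁻¹ * ‖birk n - (a m) • oneLp μ‖ := by
        rw [norm_smul, Real.norm_eq_abs, abs_of_nonneg (by positivity)]
      have e2 : ‖((m : ℝ) * n)⁻¹ • B n‖ ≤ ((m : ℝ) * n)⁻¹ * C := by
        rw [norm_smul, Real.norm_eq_abs, abs_of_nonneg (by positivity)]
        exact mul_le_mul_of_nonneg_left (hBnorm n) (by positivity)
      have e3 : ‖((a m / m - A)) • oneLp μ‖ = |a m / m - A| := by
        rw [norm_smul, Real.norm_eq_abs, oneLp_norm, mul_one]
      calc ‖W n‖ ≤ ‖(m : ℝ)⁻¹ • (birk n - (a m) • oneLp μ)‖ + ‖((m : ℝ) * n)⁻¹ • B n‖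
            + ‖((a m / m - A)) • oneLp μ‖ := by
            simp only [hW]; exact norm_add₃_le
        _ ≤ (m : ℝ)⁻¹ * ‖birk n - (a m) • oneLp μ‖ + ((m : ℝ) * n)⁻¹ * C + |a m / m - A| := by
            rw [e1, e3]; linarith
    have ht1 : Tendsto (fun n => (m : ℝ)⁻¹ * ‖birk n - (a m) • oneLp μ‖) atTop (𝓝 0) := by
      have := hbirk_tendsto.const_mul ((m : ℝ)⁻¹)
      simpa using this
    have ht2 : Tendsto (fun n : ℕ => ((m : ℝ) * n)⁻¹ * C) atTop (𝓝 0) := by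
      have h := tendsto_inv_atTop_nhds_zero_nat.const_mul ((m : ℝ)⁻¹ * C)
      rw [mul_zero] at h
      refine h.congr fun n => ?_
      rw [mul_inv]
      ring
    have he1 := ht1.eventually_lt_const (show (0 : ℝ) < ε / 3 by linarith)
    have he2 := ht2.eventually_lt_const (show (0 : ℝ) < ε / 3 by linarith)
    filter_upwards [he1, he2, eventually_ge_atTop (2 * m)] with n g1 g2 g3
    have hn1 : 1 ≤ n := by omega
    calc ‖P n‖ ≤ ‖W n‖ := hPW n g3
      _ ≤ (m : ℝ)⁻¹ * ‖birk n - (a m) • oneLp μ‖ + ((m : ℝ) * n)⁻¹ * C + |a m / m - A| :=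
          hWnorm n hn1
      _ < ε := by linarith
  -- Part 2 : the negative part tends to 0 in L²
  have hIntP : ∀ n, Integrable (⇑(P n)) μ := fun n => (Lp.memLp (P n)).integrable one_le_two
  have hIntN : ∀ n, Integrable (⇑(N n)) μ := fun n => (Lp.memLp (N n)).integrable one_le_two
  have hiZ : ∀ n, 1 ≤ n → ∫ ω, (Z n) ω ∂μ = a n / n - A := by
    intro n hn
    rw [integral_congr_ae (hZcoe n hn)]
    rw [integral_sub ((hInt n hn).div_const _) (integrable_const A)]
    rw [integral_div, integral_const]
    simp [ha]
  have hiZPN : ∀ n, ∫ ω, (Z n) ω ∂μ = (∫ ω, (P n) ω ∂μ) - ∫ ω, (N n) ω ∂μ := by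
    intro n
    rw [hZPN n, integral_congr_ae (Lp.coeFn_sub (P n) (N n))]
    simp only [Pi.sub_apply]
    rw [integral_sub (hIntP n) (hIntN n)]
  have hPnonneg : ∀ n, 0 ≤ ∫ ω, (P n) ω ∂μ := by
    intro n
    refine integral_nonneg_of_ae ?_
    filter_upwards [Lp.coeFn_posPart (Z n)] with ω e
    simp only [hP]
    rw [e]
    exact le_max_right _ _
  have hPle : ∀ n, ∫ ω, (P n) ω ∂μ ≤ ‖P n‖ := by
    intro n
    have h1 : (inner (𝕜 := ℝ) (oneLp μ) (P n)) = ∫ ω, (P n) ω ∂μ := inner_oneLp (P n)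
    have h2 := real_inner_le_norm (oneLp μ) (P n)
    rw [h1, oneLp_norm, one_mul] at h2
    exact h2
  have hPint0 : Tendsto (fun n => ∫ ω, (P n) ω ∂μ) atTop (𝓝 0) :=
    squeeze_zero hPnonneg hPle part1
  have hZint0 : Tendsto (fun n => ∫ ω, (Z n) ω ∂μ) atTop (𝓝 0) := by
    have h1 : Tendsto (fun n : ℕ => a n / n - A) atTop (𝓝 0) := by
      have := hA.sub_const A
      simpa using this
    refine h1.congr' ?_
    filter_upwards [eventually_ge_atTop 1] with n hn
    exact (hiZ n hn).symm
  have hNint0 : Tendsto (fun n => ∫ ω, (N n) ω ∂μ) atTop (𝓝 0) := by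
    have h := hPint0.sub hZint0
    rw [sub_zero] at h
    refine h.congr fun n => ?_
    rw [hiZPN n]
    ring
  have hNb : ∀ n, 1 ≤ n → ‖N n‖ ^ 2 ≤ A * ∫ ω, (N n) ω ∂μ := by
    intro n hn
    have hsq : ‖N n‖ ^ 2 = ∫ ω, (N n ω) ^ 2 ∂μ := by
      rw [← real_inner_self_eq_norm_sq, L2.inner_def]
      refine integral_congr_ae (Eventually.of_forall fun ω => ?_)
      simp [RCLike.inner_apply, sq]
    rw [hsq]
    have hbd : ∀ᵐ ω ∂μ, (N n ω) ^ 2 ≤ A * N n ω := by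
      filter_upwards [hNcoe n hn, hnonneg n hn] with ω e1 e2
      have h1 : 0 ≤ N n ω := by rw [e1]; exact le_max_right _ _
      have h2 : N n ω ≤ A := by
        rw [e1]
        have h3 : 0 ≤ f n ω / n := div_nonneg e2 (Nat.cast_nonneg n)
        exact max_le (by linarith) hA0
      nlinarith
    calc ∫ ω, (N n ω) ^ 2 ∂μ ≤ ∫ ω, A * N n ω ∂μ :=
          integral_mono_ae (Lp.memLp (N n)).integrable_sq ((hIntN n).const_mul A) hbd
      _ = A * ∫ ω, (N n) ω ∂μ := integral_const_mul A _
  have hNsq0 : Tendsto (fun n => ‖N n‖ ^ 2) atTop (𝓝 0) := by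
    have hub := hNint0.const_mul A
    rw [mul_zero] at hub
    refine squeeze_zero' (Eventually.of_forall fun n => sq_nonneg _) ?_ hub
    filter_upwards [eventually_ge_atTop 1] with n hn
    exact hNb n hn
  have part2 : Tendsto (fun n => ‖N n‖) atTop (𝓝 0) := by
    have h := (Real.continuous_sqrt.tendsto' 0 0 (by simp)).comp hNsq0
    refine h.congr fun n => ?_
    simp only [Function.comp_apply]
    exact Real.sqrt_sq (norm_nonneg _)
  have hZ0 : Tendsto (fun n => ‖Z n‖) atTop (𝓝 0) := by
    have hb := part1.add part2
    rw [add_zero] at hb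
    refine squeeze_zero (fun n => norm_nonneg _) (fun n => ?_) hb
    rw [hZPN n]
    exact norm_sub_le _ _
  have hfin : ∀ n, 1 ≤ n →
      eLpNorm (fun ω => f n ω / (n : ℝ) - A) 2 μ = ENNReal.ofReal ‖Z n‖ := by
    intro n hn
    rw [← eLpNorm_congr_ae (hZcoe n hn), Lp.norm_def,
      ENNReal.ofReal_toReal (Lp.eLpNorm_ne_top _)]
  have hof : Tendsto (fun n => ENNReal.ofReal ‖Z n‖) atTop (𝓝 0) := by
    rw [← ENNReal.ofReal_zero]
    exact (ENNReal.continuous_ofReal.tendsto _).comp hZ0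
  refine hof.congr' ?_
  filter_upwards [eventually_ge_atTop 1] with n hn
  exact (hfin n hn).symm
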